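/- arXiv:1004.1430 — 2 statements merged into one kernel-verified Lean document; each statement's English description precedes it below -/
import Mathlib

section
/- (Taxicab Lemma) For vertices u=(x,y) and v=(x',y') of the hexagonal grid, if |x−x'| ≥ |y−y'|, then the graph distance d(u,v) equals the taxicab distance |x−x'| + |y−y'|. -/
/-- The hexagonal grid in its brick wall representation: vertex set ℤ×ℤ,
with (x,y) adjacent to (x±1,y) always, and to (x,y+1) if x+y is even
(equivalently, to (x,y-1) if x+y is odd). -/
def hexGraph : SimpleGraph (ℤ × ℤ) where
  Adj u v := (u.2 = v.2 ∧ (u.1 = v.1 + 1 ∨ v.1 = u.1 + 1)) ∨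
    (u.1 = v.1 ∧ ((v.2 = u.2 + 1 ∧ Even (u.1 + u.2)) ∨ (u.2 = v.2 + 1 ∧ Even (v.1 + v.2))))
  symm := by
    constructor; rintro u v (⟨h1, h2 | h2⟩ | ⟨h1, ⟨h2, h3⟩ | ⟨h2, h3⟩⟩)
    · exact Or.inl ⟨h1.symm, Or.inr h2⟩
    · exact Or.inl ⟨h1.symm, Or.inl h2⟩
    · exact Or.inr ⟨h1.symm, Or.inr ⟨h2, h3⟩⟩
    · exact Or.inr ⟨h1.symm, Or.inl ⟨h2, h3⟩⟩
  loopless := by constructor; rintro ⟨x, y⟩ (⟨_, h | h⟩ | ⟨_, ⟨h, _⟩ | ⟨h, _⟩⟩) <;> omega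

/-- The graph distance from a vertex to the horizontal line L_k = {(x,k) : x ∈ ℤ}. -/
noncomputable def hexLineDist (u : ℤ × ℤ) (k : ℤ) : ℕ :=
  sInf {n : ℕ | ∃ x : ℤ, hexGraph.dist u (x, k) = n}

lemma hex_adj_taxicab {a b : ℤ × ℤ} (h : hexGraph.Adj a b) :
    (a.1 - b.1).natAbs + (a.2 - b.2).natAbs = 1 := by
  rcases h with ⟨h1, h2 | h2⟩ | ⟨h1, ⟨h2, _⟩ | ⟨h2, _⟩⟩ <;> omega

lemma hex_walk_lower {u v : ℤ × ℤ} (p : hexGraph.Walk u v) :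
    (u.1 - v.1).natAbs + (u.2 - v.2).natAbs ≤ p.length := by
  induction p with
  | nil => simp
  | cons h p ih =>
    have := hex_adj_taxicab h
    simp only [SimpleGraph.Walk.length_cons]
    omega

lemma hex_walk_exists : ∀ (n : ℕ) (x y x' y' : ℤ),
    (y - y').natAbs ≤ (x - x').natAbs → (x - x').natAbs + (y - y').natAbs = n →
    ∃ p : hexGraph.Walk (x, y) (x', y'), p.length = n := by
  intro n
  induction n using Nat.strong_induction_on with
  | _ n ih =>
  intro x y x' y' hxy hn
  rcases Nat.eq_zero_or_pos n with h0 | hpos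
  · have hx : x = x' := by omega
    have hy : y = y' := by omega
    subst hx; subst hy
    exact ⟨.nil, h0.symm⟩
  by_cases hy : y = y'
  · subst hy
    rcases lt_or_gt_of_ne (show x ≠ x' by omega) with hlt | hgt
    · have adj : hexGraph.Adj (x, y) (x + 1, y) := Or.inl ⟨rfl, Or.inr rfl⟩
      obtain ⟨p, hp⟩ := ih (n - 1) (by omega) (x + 1) y x' y (by omega) (by omega)
      exact ⟨.cons adj p, by simp [hp]; omega⟩
    · have adj : hexGraph.Adj (x, y) (x - 1, y) := Or.inl ⟨rfl, Or.inl (by ring)⟩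
      obtain ⟨p, hp⟩ := ih (n - 1) (by omega) (x - 1) y x' y (by omega) (by omega)
      exact ⟨.cons adj p, by simp [hp]; omega⟩
  · rcases lt_or_gt_of_ne hy with hup | hdn
    · -- need to go up: y < y'
      rcases Int.even_or_odd (x + y) with hev | hod
      · have adj : hexGraph.Adj (x, y) (x, y + 1) := Or.inr ⟨rfl, Or.inl ⟨rfl, hev⟩⟩
        obtain ⟨p, hp⟩ := ih (n - 1) (by omega) x (y + 1) x' y' (by omega) (by omega)
        exact ⟨.cons adj p, by simp [hp]; omega⟩
      · obtain ⟨k, hk⟩ := hod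
        have hxne : x ≠ x' := by omega
        rcases lt_or_gt_of_ne hxne with hlt | hgt
        · have adj1 : hexGraph.Adj (x, y) (x + 1, y) := Or.inl ⟨rfl, Or.inr rfl⟩
          have adj2 : hexGraph.Adj (x + 1, y) (x + 1, y + 1) :=
            Or.inr ⟨rfl, Or.inl ⟨rfl, ⟨k + 1, by omega⟩⟩⟩
          obtain ⟨p, hp⟩ := ih (n - 2) (by omega) (x + 1) (y + 1) x' y' (by omega) (by omega)
          exact ⟨.cons adj1 (.cons adj2 p), by simp [hp]; omega⟩
        · have adj1 : hexGraph.Adj (x, y) (x - 1, y) := Or.inl ⟨rfl, Or.inl (by ring)⟩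
          have adj2 : hexGraph.Adj (x - 1, y) (x - 1, y + 1) :=
            Or.inr ⟨rfl, Or.inl ⟨rfl, ⟨k, by omega⟩⟩⟩
          obtain ⟨p, hp⟩ := ih (n - 2) (by omega) (x - 1) (y + 1) x' y' (by omega) (by omega)
          exact ⟨.cons adj1 (.cons adj2 p), by simp [hp]; omega⟩
    · -- need to go down: y' < y
      rcases Int.even_or_odd (x + y) with hev | hod
      · obtain ⟨k, hk⟩ := hev
        have hxne : x ≠ x' := by omega
        rcases lt_or_gt_of_ne hxne with hlt | hgt
        · have adj1 : hexGraph.Adj (x, y) (x + 1, y) := Or.inl ⟨rfl, Or.inr rfl⟩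
          have adj2 : hexGraph.Adj (x + 1, y) (x + 1, y - 1) :=
            Or.inr ⟨rfl, Or.inr ⟨by ring, ⟨k, by omega⟩⟩⟩
          obtain ⟨p, hp⟩ := ih (n - 2) (by omega) (x + 1) (y - 1) x' y' (by omega) (by omega)
          exact ⟨.cons adj1 (.cons adj2 p), by simp [hp]; omega⟩
        · have adj1 : hexGraph.Adj (x, y) (x - 1, y) := Or.inl ⟨rfl, Or.inl (by ring)⟩
          have adj2 : hexGraph.Adj (x - 1, y) (x - 1, y - 1) :=
            Or.inr ⟨rfl, Or.inr ⟨by ring, ⟨k - 1, by omega⟩⟩⟩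
          obtain ⟨p, hp⟩ := ih (n - 2) (by omega) (x - 1) (y - 1) x' y' (by omega) (by omega)
          exact ⟨.cons adj1 (.cons adj2 p), by simp [hp]; omega⟩
      · obtain ⟨k, hk⟩ := hod
        have adj : hexGraph.Adj (x, y) (x, y - 1) :=
          Or.inr ⟨rfl, Or.inr ⟨by ring, ⟨k, by omega⟩⟩⟩
        obtain ⟨p, hp⟩ := ih (n - 1) (by omega) x (y - 1) x' y' (by omega) (by omega)
        exact ⟨.cons adj p, by simp [hp]; omega⟩

/-- Taxicab Lemma: if the horizontal separation is at least the
vertical separation, the hex-grid distance equals the taxicab distance. -/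
theorem hex_taxicab (x y x' y' : ℤ) (h : |x - x'| ≥ |y - y'|) :
    (hexGraph.dist (x, y) (x', y') : ℤ) = |x - x'| + |y - y'| := by
  have h' : (y - y').natAbs ≤ (x - x').natAbs := by
    rwa [Int.abs_eq_natAbs, Int.abs_eq_natAbs, ge_iff_le, Int.ofNat_le] at h
  obtain ⟨p, hp⟩ := hex_walk_exists ((x - x').natAbs + (y - y').natAbs) x y x' y' h' rfl
  have hub : hexGraph.dist (x, y) (x', y') ≤ (x - x').natAbs + (y - y').natAbs :=
    hp ▸ SimpleGraph.dist_le p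
  have hreach : hexGraph.Reachable (x, y) (x', y') := ⟨p⟩
  obtain ⟨q, hq⟩ := hreach.exists_walk_length_eq_dist
  have hlb := hex_walk_lower q
  rw [hq] at hlb
  have : hexGraph.dist (x, y) (x', y') = (x - x').natAbs + (y - y').natAbs := le_antisymm hub hlb
  rw [this, Int.abs_eq_natAbs, Int.abs_eq_natAbs]
  push_cast
  ring
end

section
/- Let r ≥ 3 be odd and let S = {x ∈ ℤ : x mod (3r−1) ∉ {1,3,5,…,r−1}}. Then any two integers x, y not in S satisfy |x−y| < r or |x−y| ≥ 2r+2, and for every integer x at least one of x, x+2, …, x+2⌈(r+1)/2⌉ belongs to S. -/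
/-- for odd r ≥ 3, with S = {x : x mod (3r−1) ∉ {1,3,…,r−1}},
any two integers outside S differ by < r or ≥ 2r+2, and every arithmetic progression
x, x+2, …, x+2⌈(r+1)/2⌉ meets S.  (Here ⌈(r+1)/2⌉ = (r+2)/2 in integer division.) -/
theorem codeword_row_odd (r : ℤ) (hr : 3 ≤ r) (hro : Odd r) :
    (∀ x y : ℤ,
      (Odd (x % (3 * r - 1)) ∧ x % (3 * r - 1) < r) →
      (Odd (y % (3 * r - 1)) ∧ y % (3 * r - 1) < r) →
      |x - y| < r ∨ 2 * r + 2 ≤ |x - y|) ∧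
    (∀ x : ℤ, ∃ j : ℤ, 0 ≤ j ∧ j ≤ (r + 2) / 2 ∧
      ¬ (Odd ((x + 2 * j) % (3 * r - 1)) ∧ (x + 2 * j) % (3 * r - 1) < r)) := by
  obtain ⟨s, hs⟩ := hro
  set m : ℤ := 3 * r - 1 with hm
  have hmpos : 0 < m := by omega
  constructor
  · intro x y ⟨⟨tx, htx⟩, hxr⟩ ⟨⟨ty, hty⟩, hyr⟩
    have hxnn : 0 ≤ x % m := Int.emod_nonneg x (by omega)
    have hynn : 0 ≤ y % m := Int.emod_nonneg y (by omega)
    have hx : m * (x / m) + x % m = x := Int.mul_ediv_add_emod x m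
    have hy : m * (y / m) + y % m = y := Int.mul_ediv_add_emod y m
    set k : ℤ := x / m - y / m with hk
    have hk2 : m * k = m * (x / m) - m * (y / m) := by rw [hk, mul_sub]
    have hxy : x - y = m * k + (x % m - y % m) := by
      rw [hk2]; linarith
    rcases lt_trichotomy k 0 with hneg | hzero | hpos
    · right
      have h1 : m * k ≤ m * (-1) := by
        apply mul_le_mul_of_nonneg_left (by omega) (by omega)
      set p : ℤ := m * k with hp
      have habs : |x - y| = -(x - y) := abs_of_nonpos (by omega)
      omega
    · left
      have hd : x - y = x % m - y % m := by rw [hxy, hzero]; ring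
      rw [abs_lt]
      omega
    · right
      have h1 : m * 1 ≤ m * k := by
        apply mul_le_mul_of_nonneg_left (by omega) (by omega)
      set p : ℤ := m * k with hp
      have habs : |x - y| = x - y := abs_of_nonneg (by omega)
      omega
  · intro x
    set a : ℤ := x % m with ha
    have hann : 0 ≤ a := Int.emod_nonneg x (by omega)
    have halt : a < m := Int.emod_lt_of_pos x hmpos
    rcases Int.even_or_odd a with ⟨t, ht⟩ | ⟨t, ht⟩
    · refine ⟨0, le_refl 0, by omega, ?_⟩
      rintro ⟨⟨u, hu⟩, _⟩
      simp only [mul_zero, add_zero] at hu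
      omega
    · rcases le_or_gt r a with hra | har
      · refine ⟨0, le_refl 0, by omega, ?_⟩
        rintro ⟨_, hlt⟩
        simp only [mul_zero, add_zero] at hlt
        omega
      · -- a odd, a < r; pick j = (r - a)/2 so that (x+2j) % m = r
        refine ⟨(r - a) / 2, by omega, by omega, ?_⟩
        have hj2 : 2 * ((r - a) / 2) = r - a := by omega
        have hmod : (x + 2 * ((r - a) / 2)) % m = r := by
          rw [Int.add_emod, ← ha, hj2]
          have h2 : (r - a) % m = r - a := Int.emod_eq_of_lt (by omega) (by omega)
          rw [h2]
          have hsum : a + (r - a) = r := by ring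
          rw [hsum]
          exact Int.emod_eq_of_lt (by omega) (by omega)
        rw [hmod]
        rintro ⟨_, hlt⟩
        exact absurd hlt (lt_irrefl r)
end
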